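/- Let a₁, …, a_m be pairwise distinct real numbers and let I ⊆ ℝ be a nonempty open interval such that |E − a_j| < 2 for every E ∈ I and every j = 1, …, m. For E ∈ I set z_j(E) = exp(i·arccos((E − a_j)/2)). Then for Lebesgue-almost every E ∈ I, the tuple (z₁(E),…,z_m(E)) is chaotic, i.e. for all indices i, j, k, l ∈ {1,…,m}: z_i·z_j·z_k·z_l ≠ 1, conj(z_i)·z_j·z_k·z_l ≠ 1, and if conj(z_i)·conj(z_j)·z_k·z_l = 1 then {i,j} = {k,l} as unordered pairs. -/

import Mathlib

open MeasureTheory Set Filter Complex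

noncomputable def stS (b E : ℝ) : ℝ := Real.sqrt (4 - (E - b)^2)
noncomputable def stG (b E : ℝ) : ℝ := (stS b E)⁻¹
noncomputable def stZ (b E : ℝ) : ℂ := (((E - b : ℝ) : ℂ) + (stS b E : ℝ) * Complex.I) / 2
noncomputable def stW (b E : ℝ) : ℂ := (((E - b : ℝ) : ℂ) - (stS b E : ℝ) * Complex.I) / 2

lemma stQ_pos {b E : ℝ} (h : |E - b| < 2) : 0 < 4 - (E - b)^2 := by
  rcases abs_lt.mp h with ⟨h1, h2⟩; nlinarith

lemma stS_pos {b E : ℝ} (h : 0 < 4 - (E - b)^2) : 0 < stS b E := Real.sqrt_pos.mpr h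

lemma stG_pos {b E : ℝ} (h : 0 < 4 - (E - b)^2) : 0 < stG b E := inv_pos.mpr (stS_pos h)

lemma stWZ {b E : ℝ} (h : 0 ≤ 4 - (E - b)^2) : stW b E * stZ b E = 1 := by
  have hs : (stS b E)^2 = 4 - (E - b)^2 := Real.sq_sqrt h
  have hc : ((stS b E : ℝ) : ℂ)^2 = 4 - ((E - b : ℝ) : ℂ)^2 := by exact_mod_cast congrArg (fun t : ℝ => (t : ℂ)) hs
  unfold stW stZ
  linear_combination (-(Complex.I^2)/4) * hc + ((((E - b : ℝ) : ℂ)^2 - 4)/4) * Complex.I_sq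

lemma stZ_ne {b E : ℝ} (h : 0 ≤ 4 - (E - b)^2) : stZ b E ≠ 0 := by
  intro h0; have := stWZ h; rw [h0, mul_zero] at this; exact one_ne_zero this.symm

lemma stW_ne {b E : ℝ} (h : 0 ≤ 4 - (E - b)^2) : stW b E ≠ 0 := by
  intro h0; have := stWZ h; rw [h0, zero_mul] at this; exact one_ne_zero this.symm

lemma stZ_conj (b E : ℝ) : (starRingEnd ℂ) (stZ b E) = stW b E := by
  unfold stZ stW
  simp [map_div₀, Complex.conj_I, Complex.conj_ofReal, map_ofNat]
  ring

lemma stS_hasDeriv {b E : ℝ} (h : 0 < 4 - (E - b)^2) :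
    HasDerivAt (stS b) (-(E - b) * stG b E) E := by
  have hq : HasDerivAt (fun E : ℝ => 4 - (E - b)^2) (-(2 * (E - b))) E := by
    have h1 : HasDerivAt (fun E : ℝ => (E - b)^2) (2 * (E - b)) E := by
      have h := ((hasDerivAt_id E).sub_const b).pow 2; simp at h; exact h
    simpa using (h1.const_sub 4)
  have := (Real.hasDerivAt_sqrt h.ne').comp E hq
  refine this.congr_deriv ?_
  unfold stG stS
  field_simp

lemma stZ_hasDeriv {b E : ℝ} (h : 0 < 4 - (E - b)^2) :
    HasDerivAt (stZ b) (-Complex.I * (stG b E : ℝ) * stZ b E) E := by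
  have h1 : HasDerivAt (fun E : ℝ => ((E - b : ℝ) : ℂ)) 1 E := by
    simpa using ((hasDerivAt_id E).sub_const b).ofReal_comp
  have h2 : HasDerivAt (fun E : ℝ => ((stS b E : ℝ) : ℂ)) ((-(E - b) * stG b E : ℝ) : ℂ) E :=
    (stS_hasDeriv h).ofReal_comp
  have h3 := ((h1.add (h2.mul_const Complex.I)).div_const 2)
  refine (h3.congr_deriv ?_)
  symm
  have hgs : (stG b E) * (stS b E) = 1 := inv_mul_cancel₀ (stS_pos h).ne'
  have hgsc : ((stG b E : ℝ) : ℂ) * ((stS b E : ℝ) : ℂ) = 1 := by exact_mod_cast congrArg (fun t : ℝ => (t : ℂ)) hgs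
  unfold stZ
  push_cast
  linear_combination (-(Complex.I^2)/2) * hgsc + (-(1:ℂ)/2) * Complex.I_sq

lemma stW_hasDeriv {b E : ℝ} (h : 0 < 4 - (E - b)^2) :
    HasDerivAt (stW b) (Complex.I * (stG b E : ℝ) * stW b E) E := by
  have h1 : HasDerivAt (fun E : ℝ => ((E - b : ℝ) : ℂ)) 1 E := by
    simpa using ((hasDerivAt_id E).sub_const b).ofReal_comp
  have h2 : HasDerivAt (fun E : ℝ => ((stS b E : ℝ) : ℂ)) ((-(E - b) * stG b E : ℝ) : ℂ) E :=
    (stS_hasDeriv h).ofReal_comp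
  have h3 := ((h1.sub (h2.mul_const Complex.I)).div_const 2)
  refine (h3.congr_deriv ?_)
  symm
  have hgs : (stG b E) * (stS b E) = 1 := inv_mul_cancel₀ (stS_pos h).ne'
  have hgsc : ((stG b E : ℝ) : ℂ) * ((stS b E : ℝ) : ℂ) = 1 := by exact_mod_cast congrArg (fun t : ℝ => (t : ℂ)) hgs
  unfold stW
  push_cast
  linear_combination (-(Complex.I^2)/2) * hgsc + (-(1:ℂ)/2) * Complex.I_sq

lemma analyticAt_rlog {x : ℝ} (hx : 0 < x) : AnalyticAt ℝ Real.log x := by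
  have h1 : AnalyticAt ℂ Complex.log (x : ℂ) :=
    analyticAt_clog (by simp [Complex.mem_slitPlane_iff, hx])
  have h2 : AnalyticAt ℝ (fun y : ℝ => (Complex.log (y : ℂ)).re) x :=
    (Complex.reCLM.analyticAt _).comp ((h1.restrictScalars).comp (Complex.ofRealCLM.analyticAt _))
  apply h2.congr
  filter_upwards with y
  exact Complex.log_ofReal_re y

lemma analyticAt_rsqrt {x : ℝ} (hx : 0 < x) : AnalyticAt ℝ Real.sqrt x := by
  have h1 : AnalyticAt ℝ (fun y : ℝ => Real.exp (Real.log y * (1/2 : ℝ))) x :=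
    analyticAt_rexp.comp ((analyticAt_rlog hx).mul analyticAt_const)
  apply h1.congr
  filter_upwards [eventually_gt_nhds hx] with y hy
  rw [Real.sqrt_eq_rpow, Real.rpow_def_of_pos hy]

lemma stQ_analytic (b x : ℝ) : AnalyticAt ℝ (fun E : ℝ => 4 - (E - b)^2) x :=
  analyticAt_const.sub (((analyticAt_id).sub analyticAt_const).pow 2)

lemma stS_analytic {b x : ℝ} (h : 0 < 4 - (x - b)^2) : AnalyticAt ℝ (stS b) x := by
  have h1 : AnalyticAt ℝ Real.sqrt ((fun E : ℝ => 4 - (E - b)^2) x) := analyticAt_rsqrt h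
  show AnalyticAt ℝ (Real.sqrt ∘ fun E : ℝ => 4 - (E - b)^2) x
  exact AnalyticAt.comp (g := Real.sqrt) (f := fun E : ℝ => 4 - (E - b)^2) (x := x) h1 (stQ_analytic b x)

lemma stG_analytic {b x : ℝ} (h : 0 < 4 - (x - b)^2) : AnalyticAt ℝ (stG b) x :=
  (stS_analytic h).inv (stS_pos h).ne'

lemma stZ_analytic {b x : ℝ} (h : 0 < 4 - (x - b)^2) : AnalyticAt ℝ (stZ b) x := by
  unfold stZ
  apply AnalyticAt.div
  · apply AnalyticAt.add
    · exact (Complex.ofRealCLM.analyticAt _).comp ((analyticAt_id).sub analyticAt_const)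
    · exact ((Complex.ofRealCLM.analyticAt _).comp (stS_analytic h)).mul analyticAt_const
  · exact analyticAt_const
  · norm_num

lemma stW_analytic {b x : ℝ} (h : 0 < 4 - (x - b)^2) : AnalyticAt ℝ (stW b) x := by
  unfold stW
  apply AnalyticAt.div
  · apply AnalyticAt.sub
    · exact (Complex.ofRealCLM.analyticAt _).comp ((analyticAt_id).sub analyticAt_const)
    · exact ((Complex.ofRealCLM.analyticAt _).comp (stS_analytic h)).mul analyticAt_const
  · exact analyticAt_const
  · norm_num

lemma hasDerivAt_prod4 {f1 f2 f3 f4 : ℝ → ℂ} {c1 c2 c3 c4 : ℂ} {E : ℝ}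
    (h1 : HasDerivAt f1 (c1 * f1 E) E) (h2 : HasDerivAt f2 (c2 * f2 E) E)
    (h3 : HasDerivAt f3 (c3 * f3 E) E) (h4 : HasDerivAt f4 (c4 * f4 E) E) :
    HasDerivAt (fun x => f1 x * f2 x * f3 x * f4 x)
      ((c1 + c2 + c3 + c4) * (f1 E * f2 E * f3 E * f4 E)) E := by
  have h := ((h1.mul h2).mul h3).mul h4
  refine h.congr_deriv ?_
  simp only [Pi.mul_apply]; ring

lemma csum_zero {f1 f2 f3 f4 : ℝ → ℂ} {c1 c2 c3 c4 : ℂ} {E : ℝ}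
    (h1 : HasDerivAt f1 (c1 * f1 E) E) (h2 : HasDerivAt f2 (c2 * f2 E) E)
    (h3 : HasDerivAt f3 (c3 * f3 E) E) (h4 : HasDerivAt f4 (c4 * f4 E) E)
    (hprod : ∀ᶠ x in nhds E, f1 x * f2 x * f3 x * f4 x = 1) :
    c1 + c2 + c3 + c4 = 0 := by
  have hD := hasDerivAt_prod4 h1 h2 h3 h4
  have hC : HasDerivAt (fun x => f1 x * f2 x * f3 x * f4 x) 0 E := by
    exact (hasDerivAt_const E (1:ℂ)).congr_of_eventuallyEq hprod
  have hu := hD.unique hC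
  have hP : f1 E * f2 E * f3 E * f4 E = 1 := hprod.self_of_nhds
  rw [hP, mul_one] at hu
  exact hu

lemma real_zero_of_I_mul {x : ℝ} (h : Complex.I * (x : ℂ) = 0) : x = 0 := by
  have := (mul_eq_zero.mp h).resolve_left Complex.I_ne_zero
  exact_mod_cast this

lemma stG_inj {x y L U : ℝ} (hLU : L < U)
    (hQx : ∀ E ∈ Set.Ioo L U, 0 < 4 - (E - x)^2)
    (hQy : ∀ E ∈ Set.Ioo L U, 0 < 4 - (E - y)^2)
    (h : ∀ E ∈ Set.Ioo L U, stG x E = stG y E) : x = y := by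
  set E1 := L + (U - L)/3 with hE1
  set E2 := L + 2*(U - L)/3 with hE2
  have hm1 : E1 ∈ Set.Ioo L U := by constructor <;> [skip; skip] <;> simp [hE1] <;> linarith
  have hm2 : E2 ∈ Set.Ioo L U := by constructor <;> [skip; skip] <;> simp [hE2] <;> linarith
  have hne : E1 ≠ E2 := by simp only [hE1, hE2]; intro hc; nlinarith [hc]
  have key : ∀ E ∈ Set.Ioo L U, (E - x)^2 = (E - y)^2 := by
    intro E hE
    have h1 := h E hE
    have hsx := stS_pos (hQx E hE)
    have hsy := stS_pos (hQy E hE)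
    have hs : stS x E = stS y E := by
      have := congrArg (fun t => t⁻¹) h1
      simpa [stG, inv_inv] using this
    have : (stS x E)^2 = (stS y E)^2 := by rw [hs]
    unfold stS at this
    rw [Real.sq_sqrt (hQx E hE).le, Real.sq_sqrt (hQy E hE).le] at this
    linarith
  have k1 := key E1 hm1
  have k2 := key E2 hm2
  have h3 : x * (E2 - E1) = y * (E2 - E1) := by nlinarith [k1, k2]
  have hne' : E2 - E1 ≠ 0 := sub_ne_zero.mpr (Ne.symm hne)
  exact mul_right_cancel₀ hne' h3

lemma stH3 {β c d e L n e1 e2 e3 : ℝ} (hL : L < β + 2) (hn : 0 < n)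
    (hc1 : β < c) (hc2 : c < β + 4) (hd1 : β < d) (hd2 : d < β + 4)
    (he1 : β < e) (he2 : e < β + 4)
    (h : ∀ E ∈ Set.Ioo L (β + 2), n * stG β E = e1 * stG c E + e2 * stG d E + e3 * stG e E) :
    False := by
  set l := nhdsWithin (β + 2) (Set.Iio (β + 2)) with hl
  have hcont : ∀ x, β < x → x < β + 4 → ContinuousAt (stG x) (β + 2) := by
    intro x h1 h2
    have hQ : 0 < 4 - ((β + 2) - x)^2 := by nlinarith
    have hQc : ContinuousAt (fun E : ℝ => 4 - (E - x)^2) (β + 2) := by fun_prop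
    have hSc : ContinuousAt (stS x) (β + 2) :=
      (Real.continuous_sqrt.continuousAt).comp hQc
    exact hSc.inv₀ (stS_pos hQ).ne'
  have hf : Tendsto (fun E => e1 * stG c E + e2 * stG d E + e3 * stG e E) l
      (nhds (e1 * stG c (β + 2) + e2 * stG d (β + 2) + e3 * stG e (β + 2))) := by
    have t1 := ((hcont c hc1 hc2).tendsto.mono_left (nhdsWithin_le_nhds (s := Set.Iio (β + 2)))).const_mul e1
    have t2 := ((hcont d hd1 hd2).tendsto.mono_left (nhdsWithin_le_nhds (s := Set.Iio (β + 2)))).const_mul e2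
    have t3 := ((hcont e he1 he2).tendsto.mono_left (nhdsWithin_le_nhds (s := Set.Iio (β + 2)))).const_mul e3
    exact (t1.add t2).add t3
  have htop : Tendsto (fun E => n * stG β E) l atTop := by
    have hS : Tendsto (stS β) l (nhdsWithin 0 (Set.Ioi 0)) := by
      rw [tendsto_nhdsWithin_iff]
      constructor
      · have hQc : ContinuousAt (fun E : ℝ => 4 - (E - β)^2) (β + 2) := by fun_prop
        have h0 : Tendsto (fun E : ℝ => 4 - (E - β)^2) l (nhds 0) := by
          have := hQc.tendsto.mono_left (nhdsWithin_le_nhds (s := Set.Iio (β + 2)))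
          convert this using 2
          norm_num
        have := (Real.continuous_sqrt.continuousAt (x := 0)).tendsto.comp h0
        rw [Real.sqrt_zero] at this; exact this
      · filter_upwards [Ioo_mem_nhdsLT (show β < β + 2 by linarith)] with E hE
        exact stS_pos (by nlinarith [hE.1, hE.2])
    have hinv : Tendsto (fun E => (stS β E)⁻¹) l atTop := hS.inv_tendsto_nhdsGT_zero
    exact hinv.const_mul_atTop hn
  have hev : (fun E => n * stG β E) =ᶠ[l] (fun E => e1 * stG c E + e2 * stG d E + e3 * stG e E) := by
    filter_upwards [Ioo_mem_nhdsLT hL] with E hE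
    exact h E hE
  have : Tendsto (fun E => e1 * stG c E + e2 * stG d E + e3 * stG e E) l atTop :=
    htop.congr' hev
  exact not_tendsto_atTop_of_tendsto_nhds hf this

lemma stSum3 {b1 b2 b3 b4 : ℝ}
    (hLU : max (max b1 b2) (max b3 b4) - 2 < min (min b1 b2) (min b3 b4) + 2)
    (hg : ∀ E ∈ Set.Ioo (max (max b1 b2) (max b3 b4) - 2)
        (min (min b1 b2) (min b3 b4) + 2),
        stG b1 E = stG b2 E + stG b3 E + stG b4 E) : False := by
  set L := max (max b1 b2) (max b3 b4) - 2 with hLdef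
  set β := min (min b1 b2) (min b3 b4) with hβdef
  have hβ1 : β ≤ b1 := le_trans (min_le_left _ _) (min_le_left _ _)
  have hβ2 : β ≤ b2 := le_trans (min_le_left _ _) (min_le_right _ _)
  have hβ3 : β ≤ b3 := le_trans (min_le_right _ _) (min_le_left _ _)
  have hβ4 : β ≤ b4 := le_trans (min_le_right _ _) (min_le_right _ _)
  have hM1 : b1 ≤ L + 2 := by
    have : b1 ≤ max (max b1 b2) (max b3 b4) := le_trans (le_max_left _ _) (le_max_left _ _)
    linarith [this]
  have hM2 : b2 ≤ L + 2 := by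
    have : b2 ≤ max (max b1 b2) (max b3 b4) := le_trans (le_max_right _ _) (le_max_left _ _)
    linarith [this]
  have hM3 : b3 ≤ L + 2 := by
    have : b3 ≤ max (max b1 b2) (max b3 b4) := le_trans (le_max_left _ _) (le_max_right _ _)
    linarith [this]
  have hM4 : b4 ≤ L + 2 := by
    have : b4 ≤ max (max b1 b2) (max b3 b4) := le_trans (le_max_right _ _) (le_max_right _ _)
    linarith [this]
  have hLU' : L < β + 2 := hLU
  have hg1 : b1 < β + 4 := by linarith
  have hg2 : b2 < β + 4 := by linarith
  have hg3 : b3 < β + 4 := by linarith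
  have hg4 : b4 < β + 4 := by linarith
  have hQ : ∀ x : ℝ, β ≤ x → x ≤ L + 2 → ∀ E ∈ Set.Ioo L (β + 2), 0 < 4 - (E - x)^2 := by
    intro x hx1 hx2 E hE
    rcases hE with ⟨he1, he2⟩
    nlinarith
  -- midpoint
  set E0 := (L + (β + 2))/2 with hE0def
  have hE0 : E0 ∈ Set.Ioo L (β + 2) := by
    constructor <;> simp [hE0def] <;> linarith
  have hpos : ∀ x : ℝ, β ≤ x → x ≤ L + 2 → 0 < stG x E0 :=
    fun x h1 h2 => stG_pos (hQ x h1 h2 E0 hE0)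
  by_cases h12 : b1 = b2
  · have h' := hg E0 hE0
    rw [h12] at h'
    have := hpos b3 hβ3 hM3
    have := hpos b4 hβ4 hM4
    linarith
  by_cases h13 : b1 = b3
  · have h' := hg E0 hE0
    rw [h13] at h'
    have := hpos b2 hβ2 hM2
    have := hpos b4 hβ4 hM4
    linarith
  by_cases h14 : b1 = b4
  · have h' := hg E0 hE0
    rw [h14] at h'
    have := hpos b2 hβ2 hM2
    have := hpos b3 hβ3 hM3
    linarith
  by_cases hm1 : b1 = β
  · have hb2 : β < b2 := lt_of_le_of_ne hβ2 (fun h => h12 (hm1.trans h))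
    have hb3 : β < b3 := lt_of_le_of_ne hβ3 (fun h => h13 (hm1.trans h))
    have hb4 : β < b4 := lt_of_le_of_ne hβ4 (fun h => h14 (hm1.trans h))
    refine stH3 (n := 1) (e1 := 1) (e2 := 1) (e3 := 1) hLU' one_pos hb2 hg2 hb3 hg3 hb4 hg4 ?_
    intro E hE
    have h' := hg E hE
    rw [hm1] at h'
    linarith
  have hb1 : β < b1 := lt_of_le_of_ne hβ1 (fun h => hm1 h.symm)
  by_cases hm2 : b2 = β
  · by_cases hm3 : b3 = β
    · by_cases hm4 : b4 = β
      · refine stH3 (n := 3) (e1 := 1) (e2 := 0) (e3 := 0) hLU' (by norm_num) hb1 hg1 hb1 hg1 hb1 hg1 ?_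
        intro E hE
        have h' := hg E hE
        rw [hm2, hm3, hm4] at h'
        linarith
      · have hb4 : β < b4 := lt_of_le_of_ne hβ4 (fun h => hm4 h.symm)
        refine stH3 (n := 2) (e1 := 1) (e2 := -1) (e3 := 0) hLU' (by norm_num) hb1 hg1 hb4 hg4 hb1 hg1 ?_
        intro E hE
        have h' := hg E hE
        rw [hm2, hm3] at h'
        linarith
    · have hb3 : β < b3 := lt_of_le_of_ne hβ3 (fun h => hm3 h.symm)
      by_cases hm4 : b4 = β
      · refine stH3 (n := 2) (e1 := 1) (e2 := -1) (e3 := 0) hLU' (by norm_num) hb1 hg1 hb3 hg3 hb1 hg1 ?_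
        intro E hE
        have h' := hg E hE
        rw [hm2, hm4] at h'
        linarith
      · have hb4 : β < b4 := lt_of_le_of_ne hβ4 (fun h => hm4 h.symm)
        refine stH3 (n := 1) (e1 := 1) (e2 := -1) (e3 := -1) hLU' one_pos hb1 hg1 hb3 hg3 hb4 hg4 ?_
        intro E hE
        have h' := hg E hE
        rw [hm2] at h'
        linarith
  have hb2 : β < b2 := lt_of_le_of_ne hβ2 (fun h => hm2 h.symm)
  by_cases hm3 : b3 = β
  · by_cases hm4 : b4 = β
    · refine stH3 (n := 2) (e1 := 1) (e2 := -1) (e3 := 0) hLU' (by norm_num) hb1 hg1 hb2 hg2 hb1 hg1 ?_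
      intro E hE
      have h' := hg E hE
      rw [hm3, hm4] at h'
      linarith
    · have hb4 : β < b4 := lt_of_le_of_ne hβ4 (fun h => hm4 h.symm)
      refine stH3 (n := 1) (e1 := 1) (e2 := -1) (e3 := -1) hLU' one_pos hb1 hg1 hb2 hg2 hb4 hg4 ?_
      intro E hE
      have h' := hg E hE
      rw [hm3] at h'
      linarith
  have hb3 : β < b3 := lt_of_le_of_ne hβ3 (fun h => hm3 h.symm)
  by_cases hm4 : b4 = β
  · refine stH3 (n := 1) (e1 := 1) (e2 := -1) (e3 := -1) hLU' one_pos hb1 hg1 hb2 hg2 hb3 hg3 ?_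
    intro E hE
    have h' := hg E hE
    rw [hm4] at h'
    linarith
  have hb4 : β < b4 := lt_of_le_of_ne hβ4 (fun h => hm4 h.symm)
  -- β must be one of the four
  have : β = b1 ∨ β = b2 ∨ β = b3 ∨ β = b4 := by
    rcases min_cases (min b1 b2) (min b3 b4) with ⟨h, _⟩ | ⟨h, _⟩
    · rcases min_cases b1 b2 with ⟨h', _⟩ | ⟨h', _⟩
      · left; rw [hβdef, h, h']
      · right; left; rw [hβdef, h, h']
    · rcases min_cases b3 b4 with ⟨h', _⟩ | ⟨h', _⟩
      · right; right; left; rw [hβdef, h, h']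
      · right; right; right; rw [hβdef, h, h']
  rcases this with h | h | h | h
  · exact absurd h.symm hm1
  · exact absurd h.symm hm2
  · exact absurd h.symm hm3
  · exact absurd h.symm hm4

lemma stPairing {b1 b2 b3 b4 : ℝ}
    (hLU : max (max b1 b2) (max b3 b4) - 2 < min (min b1 b2) (min b3 b4) + 2)
    (hg : ∀ E ∈ Set.Ioo (max (max b1 b2) (max b3 b4) - 2)
        (min (min b1 b2) (min b3 b4) + 2),
        stG b1 E + stG b2 E = stG b3 E + stG b4 E) :
    (b1 = b3 ∧ b2 = b4) ∨ (b1 = b4 ∧ b2 = b3) := by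
  set L := max (max b1 b2) (max b3 b4) - 2 with hLdef
  set β := min (min b1 b2) (min b3 b4) with hβdef
  have hβ1 : β ≤ b1 := le_trans (min_le_left _ _) (min_le_left _ _)
  have hβ2 : β ≤ b2 := le_trans (min_le_left _ _) (min_le_right _ _)
  have hβ3 : β ≤ b3 := le_trans (min_le_right _ _) (min_le_left _ _)
  have hβ4 : β ≤ b4 := le_trans (min_le_right _ _) (min_le_right _ _)
  have hM1 : b1 ≤ L + 2 := by
    have : b1 ≤ max (max b1 b2) (max b3 b4) := le_trans (le_max_left _ _) (le_max_left _ _)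
    linarith [this]
  have hM2 : b2 ≤ L + 2 := by
    have : b2 ≤ max (max b1 b2) (max b3 b4) := le_trans (le_max_right _ _) (le_max_left _ _)
    linarith [this]
  have hM3 : b3 ≤ L + 2 := by
    have : b3 ≤ max (max b1 b2) (max b3 b4) := le_trans (le_max_left _ _) (le_max_right _ _)
    linarith [this]
  have hM4 : b4 ≤ L + 2 := by
    have : b4 ≤ max (max b1 b2) (max b3 b4) := le_trans (le_max_right _ _) (le_max_right _ _)
    linarith [this]
  have hLU' : L < β + 2 := hLU
  have hg1 : b1 < β + 4 := by linarith
  have hg2 : b2 < β + 4 := by linarith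
  have hg3 : b3 < β + 4 := by linarith
  have hg4 : b4 < β + 4 := by linarith
  have hQ : ∀ x : ℝ, β ≤ x → x ≤ L + 2 → ∀ E ∈ Set.Ioo L (β + 2), 0 < 4 - (E - x)^2 := by
    intro x hx1 hx2 E hE
    rcases hE with ⟨he1, he2⟩
    nlinarith
  by_cases h13 : b1 = b3
  · left
    refine ⟨h13, ?_⟩
    refine stG_inj hLU' (hQ b2 hβ2 hM2) (hQ b4 hβ4 hM4) ?_
    intro E hE
    have h' := hg E hE
    rw [h13] at h'
    linarith
  by_cases h14 : b1 = b4
  · right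
    refine ⟨h14, ?_⟩
    refine stG_inj hLU' (hQ b2 hβ2 hM2) (hQ b3 hβ3 hM3) ?_
    intro E hE
    have h' := hg E hE
    rw [h14] at h'
    linarith
  by_cases h23 : b2 = b3
  · right
    refine ⟨?_, h23⟩
    refine stG_inj hLU' (hQ b1 hβ1 hM1) (hQ b4 hβ4 hM4) ?_
    intro E hE
    have h' := hg E hE
    rw [h23] at h'
    linarith
  by_cases h24 : b2 = b4
  · left
    refine ⟨?_, h24⟩
    refine stG_inj hLU' (hQ b1 hβ1 hM1) (hQ b3 hβ3 hM3) ?_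
    intro E hE
    have h' := hg E hE
    rw [h24] at h'
    linarith
  exfalso
  by_cases hm1 : b1 = β
  · have hb3 : β < b3 := lt_of_le_of_ne hβ3 (fun h => h13 (hm1.trans h))
    have hb4 : β < b4 := lt_of_le_of_ne hβ4 (fun h => h14 (hm1.trans h))
    by_cases hm2 : b2 = β
    · refine stH3 (n := 2) (e1 := 1) (e2 := 1) (e3 := 0) hLU' (by norm_num) hb3 hg3 hb4 hg4 hb3 hg3 ?_
      intro E hE
      have h' := hg E hE
      rw [hm1, hm2] at h'
      linarith
    · have hb2 : β < b2 := lt_of_le_of_ne hβ2 (fun h => hm2 h.symm)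
      refine stH3 (n := 1) (e1 := 1) (e2 := 1) (e3 := -1) hLU' one_pos hb3 hg3 hb4 hg4 hb2 hg2 ?_
      intro E hE
      have h' := hg E hE
      rw [hm1] at h'
      linarith
  have hb1 : β < b1 := lt_of_le_of_ne hβ1 (fun h => hm1 h.symm)
  by_cases hm2 : b2 = β
  · have hb3 : β < b3 := lt_of_le_of_ne hβ3 (fun h => h23 (hm2.trans h))
    have hb4 : β < b4 := lt_of_le_of_ne hβ4 (fun h => h24 (hm2.trans h))
    refine stH3 (n := 1) (e1 := 1) (e2 := 1) (e3 := -1) hLU' one_pos hb3 hg3 hb4 hg4 hb1 hg1 ?_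
    intro E hE
    have h' := hg E hE
    rw [hm2] at h'
    linarith
  have hb2 : β < b2 := lt_of_le_of_ne hβ2 (fun h => hm2 h.symm)
  by_cases hm3 : b3 = β
  · by_cases hm4 : b4 = β
    · refine stH3 (n := 2) (e1 := 1) (e2 := 1) (e3 := 0) hLU' (by norm_num) hb1 hg1 hb2 hg2 hb1 hg1 ?_
      intro E hE
      have h' := hg E hE
      rw [hm3, hm4] at h'
      linarith
    · have hb4 : β < b4 := lt_of_le_of_ne hβ4 (fun h => hm4 h.symm)
      refine stH3 (n := 1) (e1 := 1) (e2 := 1) (e3 := -1) hLU' one_pos hb1 hg1 hb2 hg2 hb4 hg4 ?_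
      intro E hE
      have h' := hg E hE
      rw [hm3] at h'
      linarith
  have hb3 : β < b3 := lt_of_le_of_ne hβ3 (fun h => hm3 h.symm)
  by_cases hm4 : b4 = β
  · refine stH3 (n := 1) (e1 := 1) (e2 := 1) (e3 := -1) hLU' one_pos hb1 hg1 hb2 hg2 hb3 hg3 ?_
    intro E hE
    have h' := hg E hE
    rw [hm4] at h'
    linarith
  have hb4 : β < b4 := lt_of_le_of_ne hβ4 (fun h => hm4 h.symm)
  have : β = b1 ∨ β = b2 ∨ β = b3 ∨ β = b4 := by
    rcases min_cases (min b1 b2) (min b3 b4) with ⟨h, _⟩ | ⟨h, _⟩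
    · rcases min_cases b1 b2 with ⟨h', _⟩ | ⟨h', _⟩
      · left; rw [hβdef, h, h']
      · right; left; rw [hβdef, h, h']
    · rcases min_cases b3 b4 with ⟨h', _⟩ | ⟨h', _⟩
      · right; right; left; rw [hβdef, h, h']
      · right; right; right; rw [hβdef, h, h']
  rcases this with h | h | h | h
  · exact absurd h.symm hm1
  · exact absurd h.symm hm2
  · exact absurd h.symm hm3
  · exact absurd h.symm hm4

lemma countable_bad {lo hi : ℝ} {F : ℝ → ℂ}
    (hF : AnalyticOnNhd ℝ F (Set.Ioo lo hi))
    (hne : ¬ Set.EqOn F 0 (Set.Ioo lo hi)) :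
    {E ∈ Set.Ioo lo hi | F E = 0}.Countable := by
  rcases hF.eqOn_zero_or_eventually_ne_zero_of_preconnected isPreconnected_Ioo with h | h
  · exact absurd h hne
  · rw [Filter.eventually_iff, mem_codiscreteWithin] at h
    set Z := {E ∈ Set.Ioo lo hi | F E = 0} with hZ
    have hZeq : Set.Ioo lo hi \ {x | F x ≠ 0} = Z := by
      ext x
      constructor
      · rintro ⟨hx1, hx2⟩
        exact ⟨hx1, not_not.mp hx2⟩
      · rintro ⟨hx1, hx2⟩
        exact ⟨hx1, not_not.mpr hx2⟩
    have hdisc : DiscreteTopology Z := by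
      rw [discreteTopology_subtype_iff]
      intro x hx
      have hd := h x hx.1
      rw [disjoint_principal_right, hZeq] at hd
      rw [← empty_mem_iff_bot]
      have hmm := Filter.inter_mem_inf hd (Filter.mem_principal_self Z)
      have h3 : Zᶜ ∩ Z = ∅ := by
        rw [Set.eq_empty_iff_forall_notMem]
        rintro y ⟨hy1, hy2⟩
        exact hy1 hy2
      rw [h3] at hmm
      exact hmm
    have : Countable Z := by
      have hsep : TopologicalSpace.SeparableSpace Z := by infer_instance
      exact TopologicalSpace.separableSpace_iff_countable.mp hsep
    exact Set.countable_coe_iff.mp this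

lemma ae_of_countable_bad {lo hi : ℝ} {P : ℝ → Prop}
    (h : {E ∈ Set.Ioo lo hi | ¬ P E}.Countable) :
    ∀ᵐ E ∂(volume.restrict (Set.Ioo lo hi)), P E := by
  rw [ae_iff]
  have h1 : (volume.restrict (Set.Ioo lo hi)) {x | ¬ P x}
      = volume ({x | ¬ P x} ∩ Set.Ioo lo hi) :=
    Measure.restrict_apply' measurableSet_Ioo
  rw [h1]
  refine measure_mono_null ?_ (h.measure_zero volume)
  intro x hx
  exact ⟨hx.2, hx.1⟩

lemma stExtend {lo hi b1 b2 b3 b4 c1 c2 c3 c4 : ℝ} (hlohi : lo < hi)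
    (hIJ : Set.Ioo lo hi ⊆ Set.Ioo (max (max b1 b2) (max b3 b4) - 2)
      (min (min b1 b2) (min b3 b4) + 2))
    (hgid : ∀ E ∈ Set.Ioo lo hi,
      c1 * stG b1 E + c2 * stG b2 E + c3 * stG b3 E + c4 * stG b4 E = 0) :
    ∀ E ∈ Set.Ioo (max (max b1 b2) (max b3 b4) - 2) (min (min b1 b2) (min b3 b4) + 2),
      c1 * stG b1 E + c2 * stG b2 E + c3 * stG b3 E + c4 * stG b4 E = 0 := by
  set Jl := max (max b1 b2) (max b3 b4) - 2 with hJl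
  set Ju := min (min b1 b2) (min b3 b4) + 2 with hJu
  have key : ∀ E ∈ Set.Ioo Jl Ju, ∀ x : ℝ,
      x ≤ max (max b1 b2) (max b3 b4) → min (min b1 b2) (min b3 b4) ≤ x →
      0 < 4 - (E - x)^2 := by
    intro E hE x h1 h2
    rcases hE with ⟨he1, he2⟩
    rw [hJl] at he1
    rw [hJu] at he2
    nlinarith
  have hq1 : ∀ E ∈ Set.Ioo Jl Ju, 0 < 4 - (E - b1)^2 := fun E hE => key E hE b1
    (le_trans (le_max_left _ _) (le_max_left _ _))
    (le_trans (min_le_left _ _) (min_le_left _ _))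
  have hq2 : ∀ E ∈ Set.Ioo Jl Ju, 0 < 4 - (E - b2)^2 := fun E hE => key E hE b2
    (le_trans (le_max_right _ _) (le_max_left _ _))
    (le_trans (min_le_left _ _) (min_le_right _ _))
  have hq3 : ∀ E ∈ Set.Ioo Jl Ju, 0 < 4 - (E - b3)^2 := fun E hE => key E hE b3
    (le_trans (le_max_left _ _) (le_max_right _ _))
    (le_trans (min_le_right _ _) (min_le_left _ _))
  have hq4 : ∀ E ∈ Set.Ioo Jl Ju, 0 < 4 - (E - b4)^2 := fun E hE => key E hE b4
    (le_trans (le_max_right _ _) (le_max_right _ _))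
    (le_trans (min_le_right _ _) (min_le_right _ _))
  have hGA : AnalyticOnNhd ℝ
      (fun E => c1 * stG b1 E + c2 * stG b2 E + c3 * stG b3 E + c4 * stG b4 E)
      (Set.Ioo Jl Ju) := by
    intro E hE
    exact (((analyticAt_const.mul (stG_analytic (hq1 E hE))).add
      (analyticAt_const.mul (stG_analytic (hq2 E hE)))).add
      (analyticAt_const.mul (stG_analytic (hq3 E hE)))).add
      (analyticAt_const.mul (stG_analytic (hq4 E hE)))
  have hE0I : (lo + hi)/2 ∈ Set.Ioo lo hi := ⟨by linarith, by linarith⟩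
  have hE0J : (lo + hi)/2 ∈ Set.Ioo Jl Ju := hIJ hE0I
  have hev : ∀ᶠ x in nhds ((lo + hi)/2),
      (fun E => c1 * stG b1 E + c2 * stG b2 E + c3 * stG b3 E + c4 * stG b4 E) x = 0 := by
    filter_upwards [Ioo_mem_nhds hE0I.1 hE0I.2] with x hx
    exact hgid x hx
  have hfreq := ((hev.filter_mono (nhdsWithin_le_nhds
    (s := {((lo + hi)/2 : ℝ)}ᶜ)))).frequently
  exact fun E hE =>
    hGA.eqOn_zero_of_preconnected_of_frequently_eq_zero isPreconnected_Ioo hE0J hfreq hE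

/-- For almost every energy `E` in `I`, the tuple
`z_j(E) = exp(i·arccos((E − a_j)/2))` is chaotic. -/
theorem stmt_7 {m : ℕ} (a : Fin m → ℝ) (ha : Function.Injective a)
    (lo hi : ℝ) (hlohi : lo < hi)
    (hI : ∀ E ∈ Set.Ioo lo hi, ∀ j, |E - a j| < 2)
    (z : Fin m → ℝ → ℂ)
    (hz : ∀ j E, z j E =
      Complex.exp (Complex.I * (Real.arccos ((E - a j) / 2) : ℂ))) :
    ∀ᵐ E ∂(volume.restrict (Set.Ioo lo hi)), ∀ i j k l : Fin m,
      z i E * z j E * z k E * z l E ≠ 1 ∧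
      (starRingEnd ℂ) (z i E) * z j E * z k E * z l E ≠ 1 ∧
      ((starRingEnd ℂ) (z i E) * (starRingEnd ℂ) (z j E) * z k E * z l E = 1 →
        ({i, j} : Set (Fin m)) = {k, l}) := by
  have hQmem : ∀ E ∈ Set.Ioo lo hi, ∀ t : Fin m, 0 < 4 - (E - a t)^2 :=
    fun E hE t => stQ_pos (hI E hE t)
  have hzeq : ∀ t : Fin m, ∀ E ∈ Set.Ioo lo hi, z t E = stZ (a t) E := by
    intro t E hE
    have habs := abs_lt.mp (hI E hE t)
    have hx1 : (-1 : ℝ) ≤ (E - a t)/2 := by linarith [habs.1]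
    have hx2 : (E - a t)/2 ≤ 1 := by linarith [habs.2]
    rw [hz]
    rw [mul_comm Complex.I _, Complex.exp_mul_I]
    rw [← Complex.ofReal_cos, ← Complex.ofReal_sin]
    rw [Real.cos_arccos hx1 hx2, Real.sin_arccos]
    have h4 : Real.sqrt 4 = 2 := by
      rw [show (4:ℝ) = 2^2 by norm_num, Real.sqrt_sq (by norm_num : (0:ℝ) ≤ 2)]
    have hs : Real.sqrt (1 - ((E - a t)/2)^2) = Real.sqrt (4 - (E - a t)^2) / 2 := by
      rw [show (1 - ((E - a t)/2)^2) = (4 - (E - a t)^2) * (1/2)^2 by ring]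
      rw [Real.sqrt_mul (le_of_lt (hQmem E hE t)), Real.sqrt_sq (by norm_num : (0:ℝ) ≤ 1/2)]
      ring
    rw [hs]
    unfold stZ stS
    push_cast
    ring
  have hE0I : (lo + hi)/2 ∈ Set.Ioo lo hi := ⟨by linarith, by linarith⟩
  refine ae_all_iff.mpr fun i => ae_all_iff.mpr fun j => ae_all_iff.mpr fun k =>
    ae_all_iff.mpr fun l => ?_
  have hIJ : Set.Ioo lo hi ⊆ Set.Ioo
      (max (max (a i) (a j)) (max (a k) (a l)) - 2)
      (min (min (a i) (a j)) (min (a k) (a l)) + 2) := by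
    intro E hE
    have h1 := abs_lt.mp (hI E hE i)
    have h2 := abs_lt.mp (hI E hE j)
    have h3 := abs_lt.mp (hI E hE k)
    have h4 := abs_lt.mp (hI E hE l)
    constructor
    · rw [sub_lt_iff_lt_add]
      exact max_lt (max_lt (by linarith [h1.2]) (by linarith [h2.2]))
        (max_lt (by linarith [h3.2]) (by linarith [h4.2]))
    · rw [← sub_lt_iff_lt_add]
      exact lt_min (lt_min (by linarith [h1.1]) (by linarith [h2.1]))
        (lt_min (by linarith [h3.1]) (by linarith [h4.1]))
  have hLUlt : max (max (a i) (a j)) (max (a k) (a l)) - 2 <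
      min (min (a i) (a j)) (min (a k) (a l)) + 2 :=
    lt_trans (hIJ hE0I).1 (hIJ hE0I).2
  -- Part 1
  have hA : ∀ᵐ E ∂(volume.restrict (Set.Ioo lo hi)),
      z i E * z j E * z k E * z l E ≠ 1 := by
    have hFne : ¬ Set.EqOn
        (fun E => stZ (a i) E * stZ (a j) E * stZ (a k) E * stZ (a l) E - 1)
        0 (Set.Ioo lo hi) := by
      intro hEq
      set E0 := (lo + hi)/2 with hE0def
      have hQi := hQmem E0 hE0I i
      have hQj := hQmem E0 hE0I j
      have hQk := hQmem E0 hE0I k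
      have hQl := hQmem E0 hE0I l
      have hprod : ∀ᶠ x in nhds E0,
          stZ (a i) x * stZ (a j) x * stZ (a k) x * stZ (a l) x = 1 := by
        filter_upwards [Ioo_mem_nhds hE0I.1 hE0I.2] with x hx
        have := hEq hx
        simpa [sub_eq_zero] using this
      have hcs := csum_zero (stZ_hasDeriv hQi) (stZ_hasDeriv hQj)
        (stZ_hasDeriv hQk) (stZ_hasDeriv hQl) hprod
      have hr : Complex.I * ((stG (a i) E0 + stG (a j) E0 + stG (a k) E0
          + stG (a l) E0 : ℝ) : ℂ) = 0 := by
        push_cast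
        linear_combination -hcs
      have h0 := real_zero_of_I_mul hr
      have p1 := stG_pos hQi
      have p2 := stG_pos hQj
      have p3 := stG_pos hQk
      have p4 := stG_pos hQl
      linarith
    have hFA : AnalyticOnNhd ℝ
        (fun E => stZ (a i) E * stZ (a j) E * stZ (a k) E * stZ (a l) E - 1)
        (Set.Ioo lo hi) := by
      intro E hE
      exact ((((stZ_analytic (hQmem E hE i)).mul (stZ_analytic (hQmem E hE j))).mul
        (stZ_analytic (hQmem E hE k))).mul (stZ_analytic (hQmem E hE l))).sub
        analyticAt_const
    refine ae_of_countable_bad ((countable_bad hFA hFne).mono ?_)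
    rintro x ⟨hx1, hx2⟩
    refine ⟨hx1, ?_⟩
    have hp := not_not.mp hx2
    rw [hzeq i x hx1, hzeq j x hx1, hzeq k x hx1, hzeq l x hx1] at hp
    simp [hp]
  -- Part 2
  have hB : ∀ᵐ E ∂(volume.restrict (Set.Ioo lo hi)),
      (starRingEnd ℂ) (z i E) * z j E * z k E * z l E ≠ 1 := by
    have hFne : ¬ Set.EqOn
        (fun E => stW (a i) E * stZ (a j) E * stZ (a k) E * stZ (a l) E - 1)
        0 (Set.Ioo lo hi) := by
      intro hEq
      have hgid : ∀ E ∈ Set.Ioo lo hi,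
          (1:ℝ) * stG (a i) E + (-1) * stG (a j) E + (-1) * stG (a k) E
            + (-1) * stG (a l) E = 0 := by
        intro E hE
        have hQi := hQmem E hE i
        have hQj := hQmem E hE j
        have hQk := hQmem E hE k
        have hQl := hQmem E hE l
        have hprod : ∀ᶠ x in nhds E,
            stW (a i) x * stZ (a j) x * stZ (a k) x * stZ (a l) x = 1 := by
          filter_upwards [Ioo_mem_nhds hE.1 hE.2] with x hx
          have := hEq hx
          simpa [sub_eq_zero] using this
        have hcs := csum_zero (stW_hasDeriv hQi) (stZ_hasDeriv hQj)
          (stZ_hasDeriv hQk) (stZ_hasDeriv hQl) hprod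
        have hr : Complex.I * ((stG (a i) E - stG (a j) E - stG (a k) E
            - stG (a l) E : ℝ) : ℂ) = 0 := by
          push_cast
          linear_combination hcs
        have h0 := real_zero_of_I_mul hr
        linarith
      have hgJ := stExtend hlohi hIJ hgid
      refine stSum3 hLUlt ?_
      intro E hE
      have := hgJ E hE
      linarith
    have hFA : AnalyticOnNhd ℝ
        (fun E => stW (a i) E * stZ (a j) E * stZ (a k) E * stZ (a l) E - 1)
        (Set.Ioo lo hi) := by
      intro E hE
      exact ((((stW_analytic (hQmem E hE i)).mul (stZ_analytic (hQmem E hE j))).mul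
        (stZ_analytic (hQmem E hE k))).mul (stZ_analytic (hQmem E hE l))).sub
        analyticAt_const
    refine ae_of_countable_bad ((countable_bad hFA hFne).mono ?_)
    rintro x ⟨hx1, hx2⟩
    refine ⟨hx1, ?_⟩
    have hp := not_not.mp hx2
    rw [hzeq i x hx1, hzeq j x hx1, hzeq k x hx1, hzeq l x hx1, stZ_conj] at hp
    simp [hp]
  -- Part 3
  have hC : ∀ᵐ E ∂(volume.restrict (Set.Ioo lo hi)),
      ((starRingEnd ℂ) (z i E) * (starRingEnd ℂ) (z j E) * z k E * z l E = 1 →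
        ({i, j} : Set (Fin m)) = {k, l}) := by
    by_cases hdeg : (i = k ∧ j = l) ∨ (i = l ∧ j = k)
    · refine Filter.Eventually.of_forall fun E => fun _ => ?_
      rcases hdeg with ⟨h1, h2⟩ | ⟨h1, h2⟩
      · rw [h1, h2]
      · rw [h1, h2]
        exact Set.pair_comm _ _
    · have hFne : ¬ Set.EqOn
          (fun E => stW (a i) E * stW (a j) E * stZ (a k) E * stZ (a l) E - 1)
          0 (Set.Ioo lo hi) := by
        intro hEq
        have hgid : ∀ E ∈ Set.Ioo lo hi,
            (1:ℝ) * stG (a i) E + (1:ℝ) * stG (a j) E + (-1) * stG (a k) E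
              + (-1) * stG (a l) E = 0 := by
          intro E hE
          have hQi := hQmem E hE i
          have hQj := hQmem E hE j
          have hQk := hQmem E hE k
          have hQl := hQmem E hE l
          have hprod : ∀ᶠ x in nhds E,
              stW (a i) x * stW (a j) x * stZ (a k) x * stZ (a l) x = 1 := by
            filter_upwards [Ioo_mem_nhds hE.1 hE.2] with x hx
            have := hEq hx
            simpa [sub_eq_zero] using this
          have hcs := csum_zero (stW_hasDeriv hQi) (stW_hasDeriv hQj)
            (stZ_hasDeriv hQk) (stZ_hasDeriv hQl) hprod
          have hr : Complex.I * ((stG (a i) E + stG (a j) E - stG (a k) E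
              - stG (a l) E : ℝ) : ℂ) = 0 := by
            push_cast
            linear_combination hcs
          have h0 := real_zero_of_I_mul hr
          linarith
        have hgJ := stExtend hlohi hIJ hgid
        have hpair := stPairing hLUlt (fun E hE => by have := hgJ E hE; linarith)
        rcases hpair with ⟨h1, h2⟩ | ⟨h1, h2⟩
        · exact hdeg (Or.inl ⟨ha h1, ha h2⟩)
        · exact hdeg (Or.inr ⟨ha h1, ha h2⟩)
      have hFA : AnalyticOnNhd ℝ
          (fun E => stW (a i) E * stW (a j) E * stZ (a k) E * stZ (a l) E - 1)
          (Set.Ioo lo hi) := by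
        intro E hE
        exact ((((stW_analytic (hQmem E hE i)).mul (stW_analytic (hQmem E hE j))).mul
          (stZ_analytic (hQmem E hE k))).mul (stZ_analytic (hQmem E hE l))).sub
          analyticAt_const
      refine ae_of_countable_bad ((countable_bad hFA hFne).mono ?_)
      rintro x ⟨hx1, hx2⟩
      refine ⟨hx1, ?_⟩
      rw [Classical.not_imp] at hx2
      have hp := hx2.1
      rw [hzeq i x hx1, hzeq j x hx1, hzeq k x hx1, hzeq l x hx1, stZ_conj, stZ_conj] at hp
      simp [hp]
  exact hA.and (hB.and hC)
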